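/- arXiv:2303.14550 — 2 statements merged into one kernel-verified Lean document; each statement's English description precedes it below -/
import Mathlib

section
/- Fix 0 ≤ μ ≤ 1/2. For every set T ⊆ V with μ·Vol(G) ≤ Vol(T) ≤ Vol(G)/2, one has λ_μ ≤ 2·φ(T); consequently λ_μ/2 is a lower bound for the μ-conductance φ_μ(G) = min{φ(S) : μ·Vol(G) ≤ Vol(S) ≤ Vol(G)/2}. -/
open Matrix Finset

noncomputable section

/-- Degree vector `d = A·1` of a weighted graph with symmetric adjacency matrix `A`. -/
def gDeg {n : ℕ} (A : Matrix (Fin n) (Fin n) ℝ) (i : Fin n) : ℝ := ∑ j, A i j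

/-- Degree matrix `D = Diag(d)`. -/
def gDegMat {n : ℕ} (A : Matrix (Fin n) (Fin n) ℝ) : Matrix (Fin n) (Fin n) ℝ :=
  Matrix.diagonal (gDeg A)

/-- Laplacian `L = D − A`. -/
def gLap {n : ℕ} (A : Matrix (Fin n) (Fin n) ℝ) : Matrix (Fin n) (Fin n) ℝ :=
  gDegMat A - A

/-- `Vol(S) = Σ_{i∈S} d_i`. -/
def gVol {n : ℕ} (A : Matrix (Fin n) (Fin n) ℝ) (S : Finset (Fin n)) : ℝ :=
  ∑ i ∈ S, gDeg A i

/-- `Vol(G) = Σ_i d_i`. -/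
def gVolG {n : ℕ} (A : Matrix (Fin n) (Fin n) ℝ) : ℝ := ∑ i, gDeg A i

/-- `∂S = Σ_{i∈S, j∉S} A_{ij}`. -/
def gBdry {n : ℕ} (A : Matrix (Fin n) (Fin n) ℝ) (S : Finset (Fin n)) : ℝ :=
  ∑ i ∈ S, ∑ j ∈ Sᶜ, A i j

/-- Conductance `φ(S) = ∂S / min(Vol S, Vol Sᶜ)`. -/
def gCond {n : ℕ} (A : Matrix (Fin n) (Fin n) ℝ) (S : Finset (Fin n)) : ℝ :=
  gBdry A S / min (gVol A S) (gVol A Sᶜ)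

/-- Feasibility for the μ-spectral program (μ-Spectral Cut). -/
def muSpectralFeasible {n : ℕ} (A : Matrix (Fin n) (Fin n) ℝ) (μ : ℝ) (x : Fin n → ℝ) : Prop :=
  x ⬝ᵥ (gDegMat A *ᵥ x) = 1 ∧ x ⬝ᵥ gDeg A = 0 ∧
  (∀ i, |x i| ≤ Real.sqrt ((1 - μ) / (μ * gVolG A))) ∧
  (∀ i, Real.sqrt (μ / ((1 - μ) * gVolG A)) ≤ |x i|)

/-- `λ_μ`, the optimal value of the μ-spectral program. -/
def lamMu {n : ℕ} (A : Matrix (Fin n) (Fin n) ℝ) (μ : ℝ) : ℝ :=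
  sInf {r | ∃ x : Fin n → ℝ, muSpectralFeasible A μ x ∧ r = x ⬝ᵥ (gLap A *ᵥ x)}

lemma dot_deg {n : ℕ} (A : Matrix (Fin n) (Fin n) ℝ) (x : Fin n → ℝ) :
    x ⬝ᵥ (gDegMat A *ᵥ x) = ∑ i, gDeg A i * (x i)^2 := by
  simp [gDegMat, dotProduct, Matrix.mulVec_diagonal]
  exact Finset.sum_congr rfl fun i _ => by ring

lemma quad_form_eq {n : ℕ} (A : Matrix (Fin n) (Fin n) ℝ) (hA : A.IsSymm) (x : Fin n → ℝ) :
    x ⬝ᵥ (gLap A *ᵥ x) = (1/2) * ∑ i, ∑ j, A i j * (x i - x j)^2 := by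
  have h1 : ∑ i, ∑ j, A i j * x j ^ 2 = ∑ i, ∑ j, A i j * x i ^ 2 := by
    rw [Finset.sum_comm]
    exact Finset.sum_congr rfl fun i _ => Finset.sum_congr rfl fun j _ => by rw [hA.apply]
  have hL : x ⬝ᵥ (gLap A *ᵥ x) = ∑ i, (gDeg A i * x i ^ 2 - ∑ j, A i j * (x i * x j)) := by
    simp only [dotProduct, gLap, Matrix.mulVec, Matrix.sub_apply, gDegMat,
      Matrix.diagonal_apply, dotProduct]
    refine Finset.sum_congr rfl fun i _ => ?_
    rw [Finset.mul_sum]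
    simp only [sub_mul, mul_sub, Finset.sum_sub_distrib]
    congr 1
    · simp [ite_mul, mul_ite, Finset.mul_sum]
      ring
    · exact Finset.sum_congr rfl fun j _ => by ring
  have h3 : ∑ i, gDeg A i * x i ^ 2 = ∑ i, ∑ j, A i j * x i ^ 2 := by
    simp [gDeg, Finset.sum_mul]
  rw [hL, Finset.sum_sub_distrib, h3]
  have h2 : ∀ i j : Fin n, A i j * (x i - x j)^2
      = A i j * x i ^2 + A i j * x j ^2 - 2 * (A i j * (x i * x j)) := fun i j => by ring
  simp only [h2, Finset.sum_sub_distrib, Finset.sum_add_distrib, h1, ← Finset.mul_sum]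
  ring

set_option maxHeartbeats 1000000 in
/-- **Lemma (easy side of Cheeger for μ-conductance).** For `0 ≤ μ ≤ 1/2`, every set `T` with
`μ·Vol(G) ≤ Vol(T) ≤ Vol(G)/2` satisfies `λ_μ ≤ 2·φ(T)`; consequently `λ_μ/2` is a lower
bound for the μ-conductance. -/
theorem lamMu_le_two_cond {n : ℕ} (A : Matrix (Fin n) (Fin n) ℝ)
    (hA_symm : A.IsSymm) (hA_nonneg : ∀ i j, 0 ≤ A i j) (hA_diag : ∀ i, A i i = 0)
    (μ : ℝ) (hμ0 : 0 ≤ μ) (hμ1 : μ ≤ 1/2) :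
    ∀ T : Finset (Fin n), μ * gVolG A ≤ gVol A T → gVol A T ≤ gVolG A / 2 →
      lamMu A μ ≤ 2 * gCond A T ∧ lamMu A μ / 2 ≤ gCond A T := by
  intro T hT1 hT2
  have hdeg : ∀ i, 0 ≤ gDeg A i := fun i => Finset.sum_nonneg fun j _ => hA_nonneg i j
  have hvT0 : 0 ≤ gVol A T := Finset.sum_nonneg fun i _ => hdeg i
  have hvC0 : 0 ≤ gVol A Tᶜ := Finset.sum_nonneg fun i _ => hdeg i
  have hvG0 : 0 ≤ gVolG A := Finset.sum_nonneg fun i _ => hdeg i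
  have hsum : gVol A T + gVol A Tᶜ = gVolG A := Finset.sum_add_sum_compl T (gDeg A)
  have hB0 : 0 ≤ gBdry A T :=
    Finset.sum_nonneg fun i _ => Finset.sum_nonneg fun j _ => hA_nonneg i j
  have hcond0 : 0 ≤ gCond A T := div_nonneg hB0 (le_min hvT0 hvC0)
  have hlb : ∀ r ∈ {r | ∃ x : Fin n → ℝ, muSpectralFeasible A μ x ∧ r = x ⬝ᵥ (gLap A *ᵥ x)},
      (0:ℝ) ≤ r := by
    rintro r ⟨y, -, rfl⟩
    rw [quad_form_eq A hA_symm]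
    have : (0:ℝ) ≤ ∑ i, ∑ j, A i j * (y i - y j)^2 :=
      Finset.sum_nonneg fun i _ => Finset.sum_nonneg fun j _ =>
        mul_nonneg (hA_nonneg i j) (sq_nonneg _)
    linarith
  suffices hmain : lamMu A μ ≤ 2 * gCond A T by exact ⟨hmain, by linarith⟩
  by_cases hpos : 0 < μ * gVolG A
  swap
  · -- degenerate case: feasible set is empty
    have hempty : {r | ∃ x : Fin n → ℝ, muSpectralFeasible A μ x ∧ r = x ⬝ᵥ (gLap A *ᵥ x)} = ∅ := by
      rw [Set.eq_empty_iff_forall_notMem]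
      rintro r ⟨x, ⟨h1, -, h3, -⟩, -⟩
      rcases eq_or_lt_of_le hvG0 with hvG | hvG
      · have hd0 : ∀ i, gDeg A i = 0 := by
          intro i
          have := (Finset.sum_eq_zero_iff_of_nonneg (fun i _ => hdeg i)).mp hvG.symm
          exact this i (Finset.mem_univ i)
        rw [dot_deg] at h1
        simp [hd0] at h1
      · have hμz : μ = 0 := by
          by_contra hne
          exact hpos (mul_pos (lt_of_le_of_ne hμ0 (Ne.symm hne)) hvG)
        have hx0 : ∀ i, x i = 0 := by
          intro i
          have h := h3 i
          rw [hμz] at h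
          simpa using h
        rw [dot_deg] at h1
        simp [hx0] at h1
    rw [lamMu, hempty, Real.sInf_empty]
    linarith
  -- main case
  have hμpos : 0 < μ := by
    rcases (lt_or_eq_of_le hμ0) with h | h
    · exact h
    · exfalso; rw [← h] at hpos; simp at hpos
  have hvG : 0 < gVolG A := by nlinarith
  set vT := gVol A T with hvTdef
  set vC := gVol A Tᶜ with hvCdef
  set vG := gVolG A with hvGdef
  have hvTs : vT = ∑ i ∈ T, gDeg A i := rfl
  have hvCs : vC = ∑ i ∈ Tᶜ, gDeg A i := rfl
  have hvT : 0 < vT := lt_of_lt_of_le hpos hT1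
  have hvC : 0 < vC := by linarith
  have h1μ : 0 < 1 - μ := by linarith
  have hμ1' : μ ≤ 1 - μ := by linarith
  have hvCle : vC ≤ (1-μ)*vG := by nlinarith
  have hvCge : vG/2 ≤ vC := by linarith
  have hvTleC : vT ≤ vC := le_trans hT2 hvCge
  set a := Real.sqrt (vC / (vG * vT)) with hadef
  set b := Real.sqrt (vT / (vG * vC)) with hbdef
  have ha2 : a^2 = vC/(vG*vT) := Real.sq_sqrt (by positivity)
  have hb2 : b^2 = vT/(vG*vC) := Real.sq_sqrt (by positivity)
  have ha0 : 0 ≤ a := Real.sqrt_nonneg _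
  have hb0 : 0 ≤ b := Real.sqrt_nonneg _
  have hab : a * b = 1 / vG := by
    rw [hadef, hbdef, ← Real.sqrt_mul (by positivity),
      show vC/(vG*vT) * (vT/(vG*vC)) = (1/vG)^2 by field_simp]
    exact Real.sqrt_sq (by positivity)
  set x : Fin n → ℝ := fun i => if i ∈ T then a else -b with hxdef
  have hxT : ∀ i ∈ T, x i = a := fun i hi => by simp [hxdef, hi]
  have hxC : ∀ i ∈ Tᶜ, x i = -b := fun i hi => by
    simp [hxdef, Finset.mem_compl.mp hi]
  -- Feasibility
  have hF1 : x ⬝ᵥ (gDegMat A *ᵥ x) = 1 := by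
    rw [dot_deg, ← Finset.sum_add_sum_compl T]
    have e1 : ∑ i ∈ T, gDeg A i * (x i)^2 = (∑ i ∈ T, gDeg A i) * a^2 := by
      rw [Finset.sum_mul]
      exact Finset.sum_congr rfl fun i hi => by rw [hxT i hi]
    have e2 : ∑ i ∈ Tᶜ, gDeg A i * (x i)^2 = (∑ i ∈ Tᶜ, gDeg A i) * b^2 := by
      rw [Finset.sum_mul]
      exact Finset.sum_congr rfl fun i hi => by rw [hxC i hi]; ring
    rw [e1, e2, ← hvTs, ← hvCs, ha2, hb2]
    field_simp
    linear_combination hsum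
  have haT : a * vT = Real.sqrt (vT * vC / vG) :=
    calc a * vT = Real.sqrt (vC/(vG*vT)) * Real.sqrt (vT^2) := by
          rw [Real.sqrt_sq hvT.le]
      _ = Real.sqrt (vC/(vG*vT) * vT^2) := (Real.sqrt_mul (by positivity) _).symm
      _ = Real.sqrt (vT * vC / vG) := by
          rw [show vC/(vG*vT) * vT^2 = vT * vC / vG by field_simp]
  have hbC : b * vC = Real.sqrt (vT * vC / vG) :=
    calc b * vC = Real.sqrt (vT/(vG*vC)) * Real.sqrt (vC^2) := by
          rw [Real.sqrt_sq hvC.le]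
      _ = Real.sqrt (vT/(vG*vC) * vC^2) := (Real.sqrt_mul (by positivity) _).symm
      _ = Real.sqrt (vT * vC / vG) := by
          rw [show vT/(vG*vC) * vC^2 = vT * vC / vG by field_simp]
  have hF2 : x ⬝ᵥ gDeg A = 0 := by
    rw [dotProduct, ← Finset.sum_add_sum_compl T]
    have e1 : ∑ i ∈ T, x i * gDeg A i = a * ∑ i ∈ T, gDeg A i := by
      rw [Finset.mul_sum]
      exact Finset.sum_congr rfl fun i hi => by rw [hxT i hi]
    have e2 : ∑ i ∈ Tᶜ, x i * gDeg A i = -(b * ∑ i ∈ Tᶜ, gDeg A i) := by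
      rw [Finset.mul_sum, ← Finset.sum_neg_distrib]
      exact Finset.sum_congr rfl fun i hi => by rw [hxC i hi]; ring
    rw [e1, e2, ← hvTs, ← hvCs, haT, hbC]
    ring
  have habs : ∀ i, |x i| = a ∨ |x i| = b := by
    intro i
    by_cases hi : i ∈ T
    · left; rw [hxT i hi, abs_of_nonneg ha0]
    · right; rw [hxC i (Finset.mem_compl.mpr hi), abs_neg, abs_of_nonneg hb0]
  have hub : ∀ i, |x i| ≤ Real.sqrt ((1 - μ) / (μ * vG)) := by
    have hau : a ≤ Real.sqrt ((1 - μ) / (μ * vG)) := by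
      apply Real.sqrt_le_sqrt
      rw [div_le_div_iff₀ (by positivity) (by positivity)]
      nlinarith [mul_le_mul hvCle hT1 (by positivity : (0:ℝ) ≤ μ * vG)
        (by positivity : (0:ℝ) ≤ (1-μ)*vG)]
    have hbu : b ≤ Real.sqrt ((1 - μ) / (μ * vG)) := by
      apply Real.sqrt_le_sqrt
      rw [div_le_div_iff₀ (by positivity) (by positivity)]
      nlinarith [mul_le_mul hvTleC hμ1' hμ0 hvC0, hvG.le]
    intro i; rcases habs i with h | h <;> rw [h]
    exacts [hau, hbu]
  have hlbx : ∀ i, Real.sqrt (μ / ((1 - μ) * vG)) ≤ |x i| := by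
    have hal : Real.sqrt (μ / ((1 - μ) * vG)) ≤ a := by
      apply Real.sqrt_le_sqrt
      rw [div_le_div_iff₀ (by positivity) (by positivity)]
      nlinarith [mul_le_mul hμ1' hvTleC hvT0 h1μ.le, hvG.le]
    have hbl : Real.sqrt (μ / ((1 - μ) * vG)) ≤ b := by
      apply Real.sqrt_le_sqrt
      rw [div_le_div_iff₀ (by positivity) (by positivity)]
      nlinarith [mul_le_mul_of_nonneg_left hvCle hμ0,
        mul_le_mul_of_nonneg_left hT1 h1μ.le, hvG.le]
    intro i; rcases habs i with h | h <;> rw [h]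
    exacts [hal, hbl]
  have hfeas : muSpectralFeasible A μ x := ⟨hF1, hF2, hub, hlbx⟩
  -- Value of the quadratic form
  have hQ : x ⬝ᵥ (gLap A *ᵥ x) = gBdry A T * (a+b)^2 := by
    rw [quad_form_eq A hA_symm]
    have inner : ∀ i, ∑ j, A i j * (x i - x j)^2
        = ∑ j ∈ T, A i j * (x i - a)^2 + ∑ j ∈ Tᶜ, A i j * (x i + b)^2 := by
      intro i
      rw [← Finset.sum_add_sum_compl T (fun j => A i j * (x i - x j)^2)]
      congr 1
      · exact Finset.sum_congr rfl fun j hj => by rw [hxT j hj]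
      · exact Finset.sum_congr rfl fun j hj => by rw [hxC j hj]; ring
    have eT : ∑ i ∈ T, ∑ j, A i j * (x i - x j)^2 = ∑ i ∈ T, ∑ j ∈ Tᶜ, A i j * (a+b)^2 := by
      refine Finset.sum_congr rfl fun i hi => ?_
      rw [inner i, hxT i hi]
      have z : ∑ j ∈ T, A i j * (a - a)^2 = 0 := by simp
      rw [z, zero_add]
    have eC : ∑ i ∈ Tᶜ, ∑ j, A i j * (x i - x j)^2 = ∑ i ∈ Tᶜ, ∑ j ∈ T, A i j * (a+b)^2 := by
      refine Finset.sum_congr rfl fun i hi => ?_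
      rw [inner i, hxC i hi]
      have z : ∑ j ∈ Tᶜ, A i j * (-b + b)^2 = 0 := by simp
      rw [z, add_zero]
      exact Finset.sum_congr rfl fun j _ => by ring
    have hCT : ∑ i ∈ Tᶜ, ∑ j ∈ T, A i j * (a+b)^2 = ∑ i ∈ T, ∑ j ∈ Tᶜ, A i j * (a+b)^2 := by
      rw [Finset.sum_comm]
      exact Finset.sum_congr rfl fun i _ => Finset.sum_congr rfl fun j _ => by
        rw [hA_symm.apply]
    have final : ∑ i ∈ T, ∑ j ∈ Tᶜ, A i j * (a+b)^2 = gBdry A T * (a+b)^2 := by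
      rw [gBdry, Finset.sum_mul]
      exact Finset.sum_congr rfl fun i _ => (Finset.sum_mul _ _ _).symm
    rw [← Finset.sum_add_sum_compl T (fun i => ∑ j, A i j * (x i - x j)^2), eT, eC, hCT, final]
    ring
  have hab2 : (a+b)^2 = vG/(vT*vC) := by
    have h : (a+b)^2 = a^2 + 2*(a*b) + b^2 := by ring
    rw [h, ha2, hb2, hab, ← hsum]
    field_simp
    ring
  have hcondT : gCond A T = gBdry A T / vT := by
    rw [gCond, min_eq_left hvTleC]
  have hkey : gBdry A T * (a+b)^2 ≤ 2 * gCond A T := by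
    rw [hab2, hcondT, show (2:ℝ) * (gBdry A T / vT) = gBdry A T * (2 / vT) by ring]
    apply mul_le_mul_of_nonneg_left _ hB0
    rw [div_le_div_iff₀ (by positivity) (by positivity)]
    nlinarith
  have hmem : x ⬝ᵥ (gLap A *ᵥ x) ∈
      {r | ∃ y : Fin n → ℝ, muSpectralFeasible A μ y ∧ r = y ⬝ᵥ (gLap A *ᵥ y)} :=
    ⟨x, hfeas, rfl⟩
  have hle : lamMu A μ ≤ x ⬝ᵥ (gLap A *ᵥ x) := csInf_le ⟨0, hlb⟩ hmem
  rw [hQ] at hle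
  linarith
end
end

section
/- Fix 0 < μ < 1/2 and θ ≥ 0. Suppose (Y*, s*, λ*, β*, γ*, g*, l*) satisfies the KKT conditions of the low-rank program (as listed in the context) and that Z* = L + θI − λ*D − β*ddᵀ − Diag(γ*) is positive semidefinite. Then Tr(Y*ᵀLY*) ≤ λ̂_μ^sdp, where λ̂_μ^sdp is the infimum of Tr((L + θI)X) over matrices X feasible for the μ-conductance SDP. -/
open Matrix Finset

noncomputable section

/-- Feasibility for the μ-conductance SDP (μ-Cond SDP). -/
def sdpFeasible {n : ℕ} (A : Matrix (Fin n) (Fin n) ℝ) (μ : ℝ)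
    (X : Matrix (Fin n) (Fin n) ℝ) : Prop :=
  X.PosSemidef ∧ (gDegMat A * X).trace = 1 ∧
  (vecMulVec (gDeg A) (gDeg A) * X).trace = 0 ∧
  (∀ i, X i i ≤ (1 - μ) / (μ * gVolG A)) ∧
  (∀ i, μ / ((1 - μ) * gVolG A) ≤ X i i)

/-- `λ_μ^sdp`, the optimal value of the μ-conductance SDP. -/
def lamMuSdp {n : ℕ} (A : Matrix (Fin n) (Fin n) ℝ) (μ : ℝ) : ℝ :=
  sInf {r | ∃ X : Matrix (Fin n) (Fin n) ℝ, sdpFeasible A μ X ∧ r = (gLap A * X).trace}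

/-- The KKT conditions of the low-rank program (μ-Cond LRSDP) for the primal-dual
tuple `(Y, s; lam, β, γ, g, l)`. -/
def lrKKT {n k : ℕ} (A : Matrix (Fin n) (Fin n) ℝ) (μ : ℝ)
    (Y : Matrix (Fin n) (Fin k) ℝ) (s γ g l : Fin n → ℝ) (lam β : ℝ) : Prop :=
  (gLap A - lam • gDegMat A - β • vecMulVec (gDeg A) (gDeg A) - Matrix.diagonal γ) * Y = 0 ∧
  (∀ i, l i - γ i - g i = 0) ∧
  (Yᵀ * gDegMat A * Y).trace = 1 ∧
  gDeg A ⬝ᵥ ((Y * Yᵀ) *ᵥ gDeg A) = 0 ∧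
  (∀ i, (Y * Yᵀ) i i + s i = (1 - μ) / (μ * gVolG A)) ∧
  (∀ i, 0 ≤ s i) ∧
  (∀ i, s i ≤ (1 - 2*μ) / (μ * (1 - μ) * gVolG A)) ∧
  (∀ i, 0 ≤ l i) ∧ (∀ i, 0 ≤ g i) ∧
  g ⬝ᵥ s = 0 ∧
  l ⬝ᵥ (fun i => (1 - 2*μ) / (μ * (1 - μ) * gVolG A) - s i) = 0

/-- The optimal value of the perturbed μ-conductance SDP, whose objective is
`Tr((L + θI)X)` over the same feasible region. -/
def lamMuSdpPert {n : ℕ} (A : Matrix (Fin n) (Fin n) ℝ) (μ θ : ℝ) : ℝ :=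
  sInf {r | ∃ X : Matrix (Fin n) (Fin n) ℝ, sdpFeasible A μ X ∧
    r = ((gLap A + θ • (1 : Matrix (Fin n) (Fin n) ℝ)) * X).trace}

lemma my_psd_diag_nonneg {n : ℕ} {M : Matrix (Fin n) (Fin n) ℝ} (hM : M.PosSemidef) (i : Fin n) :
    0 ≤ M i i := by simpa using hM.dotProduct_mulVec_nonneg (Pi.single i 1)

lemma my_psd_trace_nonneg {n : ℕ} {M : Matrix (Fin n) (Fin n) ℝ} (hM : M.PosSemidef) :
    0 ≤ M.trace := Finset.sum_nonneg fun i _ => my_psd_diag_nonneg hM i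

lemma my_trace_mul_psd_nonneg {n : ℕ} {Z X : Matrix (Fin n) (Fin n) ℝ}
    (hZ : Z.PosSemidef) (hX : X.PosSemidef) : 0 ≤ (Z * X).trace := by
  open scoped MatrixOrder in
  obtain ⟨B, rfl⟩ := CStarAlgebra.nonneg_iff_eq_star_mul_self.mp hX.nonneg
  rw [← Matrix.mul_assoc, Matrix.trace_mul_comm, ← Matrix.mul_assoc]
  exact my_psd_trace_nonneg (hZ.mul_mul_conjTranspose_same B)

lemma my_trace_diagonal_mul {n : ℕ} (v : Fin n → ℝ) (X : Matrix (Fin n) (Fin n) ℝ) :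
    (Matrix.diagonal v * X).trace = ∑ i, v i * X i i := by
  simp [Matrix.trace, Matrix.diag, Matrix.diagonal_mul]

lemma my_trace_vecMulVec_mul {n : ℕ} (v : Fin n → ℝ) (X : Matrix (Fin n) (Fin n) ℝ) :
    (Matrix.vecMulVec v v * X).trace = ∑ i, ∑ j, v i * v j * X j i := by
  simp [Matrix.trace, Matrix.diag, Matrix.mul_apply, Matrix.vecMulVec_apply, Finset.mul_sum]

lemma my_psd_mul_self {n k : ℕ} (Y : Matrix (Fin n) (Fin k) ℝ) : (Y * Yᵀ).PosSemidef := by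
  have := Matrix.posSemidef_conjTranspose_mul_self Yᵀ
  simpa [Matrix.conjTranspose_eq_transpose_of_trivial] using this


lemma my_stepC {n : ℕ} (A : Matrix (Fin n) (Fin n) ℝ) (γ g l : Fin n → ℝ)
    (lam β θ u m : ℝ)
    (hZpsd : (gLap A + θ • (1 : Matrix (Fin n) (Fin n) ℝ) - lam • gDegMat A
        - β • vecMulVec (gDeg A) (gDeg A) - Matrix.diagonal γ).PosSemidef)
    (hgamma : ∀ i, γ i = l i - g i) (hl0 : ∀ i, 0 ≤ l i) (hg0 : ∀ i, 0 ≤ g i)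
    (X : Matrix (Fin n) (Fin n) ℝ) (hXpsd : X.PosSemidef)
    (hXD : (gDegMat A * X).trace = 1)
    (hXdd : (vecMulVec (gDeg A) (gDeg A) * X).trace = 0)
    (hXu : ∀ i, X i i ≤ u) (hXm : ∀ i, m ≤ X i i) :
    lam + ∑ i, (m * l i - u * g i)
      ≤ ((gLap A + θ • (1 : Matrix (Fin n) (Fin n) ℝ)) * X).trace := by
  set Z := gLap A + θ • (1 : Matrix (Fin n) (Fin n) ℝ) - lam • gDegMat A
      - β • vecMulVec (gDeg A) (gDeg A) - Matrix.diagonal γ with hZ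
  have decomp : gLap A + θ • (1 : Matrix (Fin n) (Fin n) ℝ)
      = Z + lam • gDegMat A + β • vecMulVec (gDeg A) (gDeg A) + Matrix.diagonal γ := by
    rw [hZ]; abel
  rw [decomp, Matrix.add_mul, Matrix.add_mul, Matrix.add_mul,
    Matrix.trace_add, Matrix.trace_add, Matrix.trace_add]
  have tZ : 0 ≤ (Z * X).trace := my_trace_mul_psd_nonneg hZpsd hXpsd
  have tD : (lam • gDegMat A * X).trace = lam := by
    rw [Matrix.smul_mul, Matrix.trace_smul, hXD, smul_eq_mul, mul_one]
  have tdd : (β • vecMulVec (gDeg A) (gDeg A) * X).trace = 0 := by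
    rw [Matrix.smul_mul, Matrix.trace_smul, hXdd, smul_zero]
  have tγ : ∑ i, (m * l i - u * g i) ≤ (Matrix.diagonal γ * X).trace := by
    rw [my_trace_diagonal_mul]
    apply Finset.sum_le_sum
    intro i _
    rw [hgamma i, sub_mul]
    have e4 : m * l i ≤ l i * X i i := by
      rw [mul_comm]
      exact mul_le_mul_of_nonneg_left (hXm i) (hl0 i)
    have e5 : g i * X i i ≤ u * g i := by
      rw [mul_comm u]
      exact mul_le_mul_of_nonneg_left (hXu i) (hg0 i)
    linarith
  rw [tD, tdd]
  linarith

/-- If a KKT point of the low-rank program is such that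
`Z* = L + θI − λ*D − β*ddᵀ − Diag(γ*)` is positive semidefinite, then the objective at
the KKT point is at most the optimum of the perturbed SDP: `Tr(Y*ᵀLY*) ≤ λ̂_μ^sdp`. -/
theorem kkt_obj_le_perturbed_sdp {n k : ℕ} (A : Matrix (Fin n) (Fin n) ℝ)
    (hA_symm : A.IsSymm) (hA_nonneg : ∀ i j, 0 ≤ A i j) (hA_diag : ∀ i, A i i = 0)
    (μ : ℝ) (hμ0 : 0 < μ) (hμ1 : μ < 1/2)
    (θ : ℝ) (hθ : 0 ≤ θ)
    (Y : Matrix (Fin n) (Fin k) ℝ) (s γ g l : Fin n → ℝ) (lam β : ℝ)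
    (hKKT : lrKKT A μ Y s γ g l lam β)
    (hZpsd : (gLap A + θ • (1 : Matrix (Fin n) (Fin n) ℝ) - lam • gDegMat A
        - β • vecMulVec (gDeg A) (gDeg A) - Matrix.diagonal γ).PosSemidef) :
    (Yᵀ * gLap A * Y).trace ≤ lamMuSdpPert A μ θ := by
  obtain ⟨h1, h2, h3, h4, h5, hs0, hsc, hl0, hg0, hgs, hlc⟩ := hKKT
  set d := gDeg A with hd
  set V := gVolG A with hV
  set u : ℝ := (1 - μ) / (μ * V) with hu
  set c : ℝ := (1 - 2*μ) / (μ * (1 - μ) * V) with hc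
  set m : ℝ := μ / ((1 - μ) * V) with hm
  clear_value d V u c m
  have hμne : μ ≠ 0 := ne_of_gt hμ0
  have h1μ : (1 : ℝ) - μ ≠ 0 := by intro h; nlinarith
  have hucm : u = m + c := by
    rcases eq_or_ne V 0 with hV0 | hV0
    · simp [hu, hc, hm, hV0]
    · rw [hu, hc, hm]; field_simp; ring
  -- gamma in terms of l, g
  have hgamma : ∀ i, γ i = l i - g i := fun i => by have := h2 i; linarith
  have hYYd : ∀ i, (Y * Yᵀ) i i = u - s i := fun i => by have := h5 i; linarith
  -- trace of dd * (Y Yᵀ) is 0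
  have h4' : ∑ i, d i * ∑ j, (Y * Yᵀ) i j * d j = 0 := by
    simpa [dotProduct, Matrix.mulVec] using h4
  have hdd0 : (Matrix.vecMulVec d d * (Y * Yᵀ)).trace = 0 := by
    rw [my_trace_vecMulVec_mul, ← h4']
    rw [Finset.sum_comm]
    apply Finset.sum_congr rfl
    intro i _
    rw [Finset.mul_sum]
    apply Finset.sum_congr rfl
    intro j _
    ring
  -- Step A: objective value at KKT point
  have e1 : gLap A * Y = lam • gDegMat A * Y + β • vecMulVec d d * Y
      + Matrix.diagonal γ * Y := by
    have h := h1
    rw [Matrix.sub_mul, Matrix.sub_mul, Matrix.sub_mul, sub_sub, sub_sub, sub_eq_zero] at h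
    rw [h]; abel
  have traceDiagYY : ∀ v : Fin n → ℝ,
      (Yᵀ * (Matrix.diagonal v * Y)).trace = ∑ i, v i * (Y * Yᵀ) i i := by
    intro v
    rw [Matrix.trace_mul_comm, Matrix.mul_assoc, ← my_trace_diagonal_mul]
  have objA : (Yᵀ * gLap A * Y).trace = lam + ∑ i, γ i * (Y * Yᵀ) i i := by
    rw [Matrix.mul_assoc, e1]
    rw [Matrix.mul_add, Matrix.mul_add, Matrix.trace_add, Matrix.trace_add]
    have t1 : (Yᵀ * (lam • gDegMat A * Y)).trace = lam := by
      rw [Matrix.smul_mul, Matrix.mul_smul, Matrix.trace_smul, ← Matrix.mul_assoc, h3, smul_eq_mul, mul_one]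
    have t2 : (Yᵀ * (β • vecMulVec d d * Y)).trace = 0 := by
      rw [Matrix.smul_mul, Matrix.mul_smul, Matrix.trace_smul]
      have : (Yᵀ * (vecMulVec d d * Y)).trace = 0 := by
        rw [Matrix.trace_mul_comm, Matrix.mul_assoc, hdd0]
      rw [this, smul_zero]
    rw [t1, t2, traceDiagYY γ]; ring
  -- Step B
  have keyB : ∑ i, γ i * (Y * Yᵀ) i i = ∑ i, (m * l i - u * g i) := by
    have expand : ∀ i ∈ Finset.univ, γ i * (Y * Yᵀ) i i
        = (m * l i - u * g i) + l i * (c - s i) + g i * s i := by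
      intro i _
      rw [hgamma i, hYYd i, hucm]; ring
    rw [Finset.sum_congr rfl expand]
    rw [Finset.sum_add_distrib, Finset.sum_add_distrib]
    have e2 : ∑ i, l i * (c - s i) = 0 := hlc
    have e3 : ∑ i, g i * s i = 0 := hgs
    rw [e2, e3]; ring
  -- Feasibility of X* = Y Yᵀ
  have hdd0' : (Matrix.vecMulVec (gDeg A) (gDeg A) * (Y * Yᵀ)).trace = 0 := by
    rw [← hd]; exact hdd0
  have huV : u = (1 - μ) / (μ * gVolG A) := by rw [hu, hV]
  have hcV : c = (1 - 2*μ) / (μ * (1 - μ) * gVolG A) := by rw [hc, hV]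
  have hmV : m = μ / ((1 - μ) * gVolG A) := by rw [hm, hV]
  have hfeas : sdpFeasible A μ (Y * Yᵀ) := by
    refine ⟨my_psd_mul_self Y, ?_, hdd0', ?_, ?_⟩
    · rw [Matrix.trace_mul_comm, Matrix.mul_assoc, Matrix.trace_mul_comm]
      exact h3
    · intro i
      have e := hYYd i
      have := hs0 i
      rw [← huV]
      linarith
    · intro i
      have e := hYYd i
      have := hsc i
      rw [← hmV]
      linarith [hucm]
  -- conclude
  have hZ' := hZpsd
  rw [hd] at hZ'
  rw [objA, keyB]
  unfold lamMuSdpPert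
  apply le_csInf
  · exact ⟨((gLap A + θ • (1 : Matrix (Fin n) (Fin n) ℝ)) * (Y * Yᵀ)).trace,
      Y * Yᵀ, hfeas, rfl⟩
  · rintro r ⟨X, hX, rfl⟩
    obtain ⟨hXpsd, hXD, hXdd, hXu, hXm⟩ := hX
    exact my_stepC A γ g l lam β θ u m hZ' hgamma hl0 hg0 X hXpsd hXD hXdd
      (fun i => by rw [huV]; exact hXu i) (fun i => by rw [hmV]; exact hXm i)
end
end
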